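/- Let Φ be a type I endomorphism of G_α, with associated matrix Q and homomorphism φ, and let u ∈ F_n and k, p ∈ ℕ be such that φ^{k+p}(u) = φ^k(u). Define the affine transformation Θ : ℤ^m → ℤ^m by x ↦ x·Q^p + τ(Φ^p(φ^k(u))), where φ^k(u) ∈ F_n is regarded as an element of G_α. Then for every integer λ ≥ 1 and every a ∈ ℤ^m, τ(Φ^{k+λp}(u·t^a)) = Θ^λ(τ(Φ^k(u·t^a))). -/

import Mathlib

open Matrix SemidirectProduct

/-- The free abelian group `ℤ^m`, written multiplicatively. -/
abbrev FA (m : ℕ) : Type := Multiplicative (Fin m → ℤ)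

/-- The (right) action of `GL_m(ℤ)` on `ℤ^m` (row vectors), as a homomorphism into
`MulAut (ℤ^m)`: the automorphism attached to `M` sends `a` to `a · M⁻¹`, so that in the
semidirect product below one gets the relation `u⁻¹ tᵃ u = t^(a·A_u)`. -/
def rowAction (m : ℕ) :
    Matrix.GeneralLinearGroup (Fin m) ℤ →* MulAut (FA m) where
  toFun M :=
  { toFun := fun a => Multiplicative.ofAdd
      (Matrix.vecMul (Multiplicative.toAdd a)
        ((↑(M⁻¹) : Matrix (Fin m) (Fin m) ℤ)))
    invFun := fun a => Multiplicative.ofAdd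
      (Matrix.vecMul (Multiplicative.toAdd a) ((↑M : Matrix (Fin m) (Fin m) ℤ)))
    left_inv := by
      intro a
      simp [Matrix.vecMul_vecMul]
    right_inv := by
      intro a
      simp [Matrix.vecMul_vecMul]
    map_mul' := by
      intro a b
      simp [Matrix.add_vecMul] }
  map_one' := by
    ext a
    simp
  map_mul' := by
    intro M N
    ext a
    simp [Matrix.vecMul_vecMul, _root_.mul_inv_rev]

/-- The free-abelian by free group `G_α = F_n ⋉_α ℤ^m` associated to
`α : F_n → GL_m(ℤ)`; it satisfies `u⁻¹ tᵃ u = t^(a·A_u)`. -/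
abbrev Gsd {n m : ℕ} (α : FreeGroup (Fin n) →* Matrix.GeneralLinearGroup (Fin m) ℤ) :
    Type :=
  FA m ⋊[(rowAction m).comp α] FreeGroup (Fin n)

/-- `tA α a` is the element `tᵃ` of the abelian part of `G_α`. -/
def tA {n m : ℕ} (α : FreeGroup (Fin n) →* Matrix.GeneralLinearGroup (Fin m) ℤ)
    (a : Fin m → ℤ) : Gsd α :=
  SemidirectProduct.inl (Multiplicative.ofAdd a)

/-- `fE α u` is the element `u` of the free part of `G_α`. -/
def fE {n m : ℕ} (α : FreeGroup (Fin n) →* Matrix.GeneralLinearGroup (Fin m) ℤ)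
    (u : FreeGroup (Fin n)) : Gsd α :=
  SemidirectProduct.inr u

/-- The projection `τ : G_α → ℤ^m`, reading off the abelian part of the normal form
`g = u · tᵃ` (i.e. `τ (fE α u * tA α a) = a`). -/
def tau {n m : ℕ} (α : FreeGroup (Fin n) →* Matrix.GeneralLinearGroup (Fin m) ℤ)
    (g : Gsd α) : Fin m → ℤ :=
  Matrix.vecMul (Multiplicative.toAdd (SemidirectProduct.left g))
    ((↑(α (SemidirectProduct.right g)) : Matrix (Fin m) (Fin m) ℤ))


section Aux
variable {n m : ℕ} (α : FreeGroup (Fin n) →* Matrix.GeneralLinearGroup (Fin m) ℤ)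

lemma tau_mul_tA (g : Gsd α) (d : Fin m → ℤ) :
    tau α (g * tA α d) = tau α g + d := by
  unfold tau tA
  rw [SemidirectProduct.mul_left, SemidirectProduct.mul_right, SemidirectProduct.left_inl,
    SemidirectProduct.right_inl]
  simp [SemidirectProduct.left_inl, SemidirectProduct.right_inl,
    SemidirectProduct.mul_left, SemidirectProduct.mul_right, rowAction,
    Matrix.add_vecMul, Matrix.vecMul_vecMul]

lemma fE_mul_tA_tau (g : Gsd α) : fE α g.right * tA α (tau α g) = g := by
  ext
  · rw [SemidirectProduct.mul_left]
    unfold fE tA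
    rw [SemidirectProduct.left_inr, SemidirectProduct.right_inr,
      SemidirectProduct.left_inl]
    simp [fE, tA, tau, rowAction, SemidirectProduct.left_inl, SemidirectProduct.right_inl,
      SemidirectProduct.left_inr, SemidirectProduct.right_inr, SemidirectProduct.mul_left,
      Matrix.vecMul_vecMul]
  · simp [fE, tA, SemidirectProduct.mul_right]

lemma tau_fE (v : FreeGroup (Fin n)) : tau α (fE α v) = 0 := by
  simp [tau, fE]

end Aux

section Aux2
variable {n m : ℕ} (α : FreeGroup (Fin n) →* Matrix.GeneralLinearGroup (Fin m) ℤ)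
  (Φ : Monoid.End (Gsd α)) (Q : Matrix (Fin m) (Fin m) ℤ)
  (hQ : ∀ a : Fin m → ℤ, Φ (tA α a) = tA α (Matrix.vecMul a Q))
  (φ : Monoid.End (FreeGroup (Fin n)))
  (hφ : ∀ u : FreeGroup (Fin n), SemidirectProduct.rightHom (Φ (fE α u)) = φ u)

include hQ hφ

lemma right_Phi (g : Gsd α) : (Φ g).right = φ g.right := by
  conv_lhs => rw [← fE_mul_tA_tau α g]
  rw [← SemidirectProduct.rightHom_eq_right]
  simp only [_root_.map_mul, hQ, hφ]
  simp [tA]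

lemma right_Phi_pow (j : ℕ) (g : Gsd α) : ((Φ ^ j) g).right = (φ ^ j) g.right := by
  induction j with
  | zero => simp
  | succ j ih =>
    rw [pow_succ', pow_succ']
    have : (Φ ^ (j+1)) g = Φ ((Φ ^ j) g) := by rw [pow_succ']; rfl
    calc ((Φ * Φ ^ j) g).right = (Φ ((Φ ^ j) g)).right := rfl
      _ = φ (((Φ ^ j) g).right) := right_Phi α Φ Q hQ φ hφ _
      _ = φ ((φ ^ j) g.right) := by rw [ih]
      _ = (φ * φ ^ j) g.right := rfl

lemma tau_Phi (g : Gsd α) :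
    tau α (Φ g) = tau α (Φ (fE α g.right)) + Matrix.vecMul (tau α g) Q := by
  conv_lhs => rw [← fE_mul_tA_tau α g]
  rw [_root_.map_mul, hQ, tau_mul_tA]

lemma tau_Phi_pow (j : ℕ) (g : Gsd α) :
    tau α ((Φ ^ j) g) = tau α ((Φ ^ j) (fE α g.right)) + Matrix.vecMul (tau α g) (Q ^ j) := by
  induction j with
  | zero => simp [tau_fE]
  | succ j ih =>
    have h1 : (Φ ^ (j+1)) g = Φ ((Φ ^ j) g) := by rw [pow_succ']; rfl
    have h2 : (Φ ^ (j+1)) (fE α g.right) = Φ ((Φ ^ j) (fE α g.right)) := by rw [pow_succ']; rfl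
    have hr : ((Φ ^ j) g).right = ((Φ ^ j) (fE α g.right)).right := by
      rw [right_Phi_pow α Φ Q hQ φ hφ, right_Phi_pow α Φ Q hQ φ hφ]
      simp [fE]
    rw [h1, h2, tau_Phi α Φ Q hQ φ hφ ((Φ ^ j) g),
      tau_Phi α Φ Q hQ φ hφ ((Φ ^ j) (fE α g.right)), hr, ih,
      Matrix.add_vecMul, Matrix.vecMul_vecMul, ← pow_succ, add_assoc]

end Aux2


/-- If `φ^(k+p)(u) = φ^k(u)` then for each `λ ≥ 1` and `a`,
`τ(Φ^(k+λp)(u·tᵃ)) = Θ^λ(τ(Φ^k(u·tᵃ)))`, where `Θ(x) = x·Q^p + τ(Φ^p(φ^k(u)))`. -/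
theorem periodic_affine {n m : ℕ} (hn : 2 ≤ n) (hm : 1 ≤ m)
    (α : FreeGroup (Fin n) →* Matrix.GeneralLinearGroup (Fin m) ℤ)
    (Φ : Monoid.End (Gsd α)) (Q : Matrix (Fin m) (Fin m) ℤ)
    (hQ : ∀ a : Fin m → ℤ, Φ (tA α a) = tA α (Matrix.vecMul a Q))
    (φ : Monoid.End (FreeGroup (Fin n)))
    (hφ : ∀ u : FreeGroup (Fin n), SemidirectProduct.rightHom (Φ (fE α u)) = φ u)
    (u : FreeGroup (Fin n)) (k p : ℕ)
    (h : (φ ^ (k + p)) u = (φ ^ k) u)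
    (Θ : (Fin m → ℤ) → (Fin m → ℤ))
    (hΘ : ∀ x : Fin m → ℤ,
      Θ x = Matrix.vecMul x (Q ^ p) + tau α ((Φ ^ p) (fE α ((φ ^ k) u))))
    (lam : ℕ) (hlam : 1 ≤ lam) (a : Fin m → ℤ) :
    tau α ((Φ ^ (k + lam * p)) (fE α u * tA α a))
      = Θ^[lam] (tau α ((Φ ^ k) (fE α u * tA α a))) := by
  clear hn hm hlam
  set g : Gsd α := fE α u * tA α a with hg
  have hgr : g.right = u := by simp [hg, fE, tA, SemidirectProduct.mul_right]
  -- periodicity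
  have hper : ∀ j : ℕ, (φ ^ (k + j * p)) u = (φ ^ k) u := by
    intro j
    induction j with
    | zero => simp
    | succ j ih =>
      have e1 : k + (j+1) * p = (j * p) + (k + p) := by ring
      calc (φ ^ (k + (j+1) * p)) u = (φ ^ (j*p)) ((φ ^ (k+p)) u) := by
            rw [e1, pow_add]; rfl
        _ = (φ ^ (j*p)) ((φ ^ k) u) := by rw [h]
        _ = (φ ^ (j*p + k)) u := by rw [pow_add]; rfl
        _ = (φ ^ k) u := by rw [Nat.add_comm]; exact ih
  induction lam with
  | zero => simp
  | succ lam ih =>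
    have hsplit : k + (lam + 1) * p = p + (k + lam * p) := by ring
    rw [hsplit, pow_add]
    have : (Φ ^ p * Φ ^ (k + lam * p)) g = (Φ ^ p) ((Φ ^ (k + lam * p)) g) := rfl
    rw [this, tau_Phi_pow α Φ Q hQ φ hφ p, right_Phi_pow α Φ Q hQ φ hφ, hgr, hper,
      ih, Function.iterate_succ_apply', hΘ, add_comm]
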